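/- arXiv:1311.2984 — 7 statements merged into one kernel-verified Lean document; each statement's English description precedes it below -/
import Mathlib

section
/- If n is a positive integer that is not a power of 2 (and n > 1), with least prime divisor q and greatest prime divisor p, then ∑_{d ∣ n} φ(d)·d ≥ ((q+1)/q)·(n²/p). -/
open ArithmeticFunction Finset

noncomputable def myF : ArithmeticFunction ℕ := zeta * ⟨fun d => d.totient * d, by simp⟩

lemma myF_mult : myF.IsMultiplicative := by
  refine isMultiplicative_zeta.mul ⟨by simp, fun {m n} cop => ?_⟩
  show (m*n).totient * (m*n) = (m.totient * m) * (n.totient * n)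
  rw [Nat.totient_mul cop]; ring

lemma myF_apply (n : ℕ) : myF n = ∑ d ∈ n.divisors, d.totient * d := by
  rw [myF]; exact zeta_mul_apply

lemma myF_pp (r k : ℕ) (hr : r.Prime) : r ^ (2*k+1) ≤ (r+1) * myF (r ^ k) := by
  rw [myF_apply, Nat.sum_divisors_prime_pow hr]
  obtain ⟨s, rfl⟩ : ∃ s, r = s + 1 := ⟨r - 1, (Nat.succ_pred_eq_of_pos hr.pos).symm⟩
  induction k with
  | zero => simp
  | succ k ih =>
    rw [Finset.sum_range_succ, Nat.totient_prime_pow hr (Nat.succ_pos k)]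
    simp only [Nat.succ_sub_one, Nat.add_sub_cancel]
    have e1 : (s+1)^(2*(k+1)+1) = (s+1)^(2*k+1) * (s+1)^2 := by ring
    have e2 : (s+1)^k * s * (s+1)^(k+1) = s * (s+1)^(2*k+1) := by ring
    nlinarith [ih, e1, e2]
lemma prodA : ∀ (k : ℕ) (S : Finset ℕ) (m : ℕ), S.card = k → 0 < m →
    (∀ r ∈ S, m ≤ r) →
    (m : ℚ) / (m + k) ≤ ∏ r ∈ S, (r : ℚ) / ((r : ℚ) + 1) := by
  intro k
  induction k with
  | zero =>
    intro S m hc hm _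
    rw [Finset.card_eq_zero.mp hc]
    have : (m:ℚ) ≠ 0 := by positivity
    simp [div_self this]
  | succ k ih =>
    intro S m hc hm hS
    have hne : S.Nonempty := Finset.card_pos.mp (by omega)
    set a := S.min' hne with ha
    have haS : a ∈ S := S.min'_mem hne
    have hma : m ≤ a := hS a haS
    have hrest : ∀ r ∈ S.erase a, m + 1 ≤ r := by
      intro r hr
      have h1 := S.min'_le r (Finset.mem_of_mem_erase hr)
      have h2 : r ≠ a := Finset.ne_of_mem_erase hr
      omega
    have hcard : (S.erase a).card = k := by
      rw [Finset.card_erase_of_mem haS, hc]; omega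
    have hIH := ih (S.erase a) (m+1) hcard (by omega) hrest
    rw [← Finset.mul_prod_erase S _ haS]
    have hmq : (0:ℚ) < (m:ℚ) := by positivity
    have hmaq : (m:ℚ) ≤ (a:ℚ) := by exact_mod_cast hma
    have hkq : (0:ℚ) ≤ (k:ℚ) := by positivity
    have h1 : (m:ℚ)/(m+1) ≤ (a:ℚ)/((a:ℚ)+1) := by
      rw [div_le_div_iff₀ (by positivity) (by positivity)]
      nlinarith
    have h2 : ((m:ℚ)+1)/((m:ℚ)+1+k) ≤ ∏ r ∈ S.erase a, (r:ℚ)/((r:ℚ)+1) := by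
      convert hIH using 2 <;> push_cast <;> ring
    have key : (m:ℚ)/((m:ℚ)+((k:ℚ)+1)) = (m:ℚ)/(m+1) * (((m:ℚ)+1)/((m:ℚ)+1+k)) := by
      rw [div_mul_div_comm]
      rw [div_eq_div_iff (by positivity) (by positivity)]
      ring
    push_cast
    calc (m:ℚ)/((m:ℚ)+((k:ℚ)+1)) = (m:ℚ)/(m+1) * (((m:ℚ)+1)/((m:ℚ)+1+k)) := key
      _ ≤ (a:ℚ)/((a:ℚ)+1) * ∏ r ∈ S.erase a, (r:ℚ)/((r:ℚ)+1) := by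
          apply mul_le_mul h1 h2 (by positivity) (by positivity)


theorem sum_totient_mul_self_lower_bound (n q p : ℕ) (hn : 1 < n)
    (hnot2 : ¬ ∃ k, n = 2 ^ k)
    (hq : q.Prime) (hqdvd : q ∣ n) (hqmin : ∀ r : ℕ, r.Prime → r ∣ n → q ≤ r)
    (hp : p.Prime) (hpdvd : p ∣ n) (hpmax : ∀ r : ℕ, r.Prime → r ∣ n → r ≤ p) :
    (∑ d ∈ n.divisors, (Nat.totient d * d : ℚ)) ≥
      ((q : ℚ) + 1) * (n : ℚ) ^ 2 / ((q : ℚ) * (p : ℚ)) := by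
  have hn0 : n ≠ 0 := by omega
  set S := n.primeFactors with hSdef
  -- p ≥ 3
  have hp3 : 3 ≤ p := by
    by_contra h
    have hp2 : p = 2 := by
      interval_cases p
      · exact absurd rfl hp.ne_zero
      · exact absurd rfl hp.ne_one
      · rfl
    exact hnot2 ⟨n.primeFactorsList.length, by
      rw [← hp2]
      exact Nat.eq_prime_pow_of_unique_prime_dvd hn0 (fun {d} hd hdvd =>
        le_antisymm (hpmax d hd hdvd) (hp2 ▸ hd.two_le))⟩
  have hq2 : 2 ≤ q := hq.two_le
  have hqp : q ≤ p := hqmin p hp hpdvd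
  -- card bound
  have hsub : S ⊆ Finset.Icc q p := by
    intro r hr
    rw [Nat.mem_primeFactors] at hr
    exact Finset.mem_Icc.mpr ⟨hqmin r hr.1 hr.2.1, hpmax r hr.1 hr.2.1⟩
  have hcard : S.card + q ≤ p + 1 := by
    have := Finset.card_le_card hsub
    rw [Nat.card_Icc] at this
    omega
  -- step 1: prodA
  have hstep1 : (q:ℚ)/(q + S.card) ≤ ∏ r ∈ S, (r:ℚ)/((r:ℚ)+1) := by
    refine prodA S.card S q rfl hq.pos (fun r hr => ?_)
    rw [hSdef, Nat.mem_primeFactors] at hr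
    exact hqmin r hr.1 hr.2.1
  -- step 2: myF n >= n^2 * prod
  have hfact : (myF n : ℚ) = ∏ r ∈ S, (myF (r ^ n.factorization r) : ℚ) := by
    rw [myF_mult.multiplicative_factorization myF hn0, Finsupp.prod,
      Nat.support_factorization]
    push_cast
    rfl
  have hnprod : (n:ℚ) = ∏ r ∈ S, (r:ℚ) ^ n.factorization r := by
    conv_lhs => rw [← Nat.factorization_prod_pow_eq_self hn0]
    rw [Finsupp.prod, Nat.support_factorization]
    push_cast
    rfl
  have hstep2 : (n:ℚ)^2 * ∏ r ∈ S, (r:ℚ)/((r:ℚ)+1) ≤ (myF n : ℚ) := by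
    rw [hfact, hnprod, ← Finset.prod_pow, ← Finset.prod_mul_distrib]
    apply Finset.prod_le_prod
    · intro r hr
      positivity
    · intro r hr
      have hrP : r.Prime := Nat.prime_of_mem_primeFactors hr
      set a := n.factorization r
      have hcast : ((r:ℚ))^(2*a+1) ≤ ((r:ℚ)+1) * (myF (r^a) : ℚ) := by
        exact_mod_cast myF_pp r a hrP
      have hrpos : (0:ℚ) < (r:ℚ)+1 := by positivity
      calc ((r:ℚ)^a)^2 * ((r:ℚ)/((r:ℚ)+1)) = (r:ℚ)^(2*a+1) / ((r:ℚ)+1) := by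
            rw [mul_div_assoc']
            ring_nf
        _ ≤ (myF (r^a) : ℚ) := by
            rw [div_le_iff₀ hrpos]
            linarith [hcast]
  -- arithmetic
  have hq2' : (2:ℚ) ≤ (q:ℚ) := by exact_mod_cast hq2
  have hp3' : (3:ℚ) ≤ (p:ℚ) := by exact_mod_cast hp3
  have hcard' : ((S.card:ℚ)) + q ≤ (p:ℚ) + 1 := by exact_mod_cast hcard
  have key : ((q:ℚ)+1)*((q:ℚ)+S.card) ≤ (q:ℚ)^2*(p:ℚ) := by
    nlinarith [mul_nonneg (sub_nonneg.mpr hp3') (show (0:ℚ) ≤ (q:ℚ)^2 - q - 1 by nlinarith)]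
  have hcpos : (0:ℚ) < (q:ℚ) + S.card := by positivity
  rw [ge_iff_le]
  calc ((q:ℚ)+1) * (n:ℚ)^2 / ((q:ℚ)*(p:ℚ)) ≤ (n:ℚ)^2 * ((q:ℚ)/(q + S.card)) := by
        rw [mul_div_assoc']
        rw [div_le_div_iff₀ (by positivity) hcpos]
        nlinarith [mul_le_mul_of_nonneg_left key (sq_nonneg (n:ℚ))]
    _ ≤ (n:ℚ)^2 * ∏ r ∈ S, (r:ℚ)/((r:ℚ)+1) :=
        mul_le_mul_of_nonneg_left hstep1 (sq_nonneg _)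
    _ ≤ (myF n : ℚ) := hstep2
    _ = ∑ d ∈ n.divisors, (Nat.totient d * d : ℚ) := by
        rw [myF_apply]
        push_cast
        rfl
end

section
/- For the cyclic group ℤ_n, the number of edges in its power graph equals ∑_{d ∣ n} φ(d)·(d − φ(d)/2) − n/2, i.e., 2|E(ℤ_n)| = 2∑_{d∣n} φ(d)·d − ∑_{d∣n} φ(d)² − n. -/
/-- The (undirected) power graph of a group: distinct elements are adjacent
iff one is a power of the other. -/
def powerGraph (G : Type*) [Group G] : SimpleGraph G where
  Adj g h := g ≠ h ∧ (g ∈ Subgroup.zpowers h ∨ h ∈ Subgroup.zpowers g)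
  symm := ⟨fun _ _ ⟨hne, hor⟩ => ⟨hne.symm, hor.symm⟩⟩
  loopless := ⟨fun _ ⟨hne, _⟩ => hne rfl⟩

open Subgroup Finset in
theorem my_mem_zpowers_iff {G : Type*} [Group G] [Fintype G] [IsCyclic G] [DecidableEq G] (x y : G) :
    y ∈ zpowers x ↔ orderOf y ∣ orderOf x := by
  constructor
  · exact orderOf_dvd_of_mem_zpowers
  · intro h
    have hpos : 0 < orderOf x := orderOf_pos x
    have hcard : #(univ.filter (· ∈ zpowers x)) = orderOf x := by
      rw [← Fintype.card_subtype, Fintype.card_zpowers]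
    have hle : #(univ.filter (fun a : G => a ^ orderOf x = 1)) ≤ orderOf x :=
      IsCyclic.card_pow_eq_one_le hpos
    have hsub : univ.filter (· ∈ zpowers x) ⊆ univ.filter (fun a : G => a ^ orderOf x = 1) := by
      intro a ha
      simp only [mem_filter, mem_univ, true_and] at ha ⊢
      exact orderOf_dvd_iff_pow_eq_one.mp (orderOf_dvd_of_mem_zpowers ha)
    have heq := Finset.eq_of_subset_of_card_le hsub (hcard ▸ hle)
    have : y ∈ univ.filter (fun a : G => a ^ orderOf x = 1) := by
      simp [orderOf_dvd_iff_pow_eq_one.mp h]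
    rw [← heq] at this
    simpa using this

open Finset Nat in
theorem my_sum_aux (n : ℕ) (hn0 : n ≠ 0) :
    (∑ q ∈ (n.divisors ×ˢ n.divisors).filter (fun q => q.1 ∣ q.2 ∨ q.2 ∣ q.1),
        totient q.1 * totient q.2) + ∑ d ∈ n.divisors, totient d ^ 2 =
      2 * ∑ d ∈ n.divisors, totient d * d := by
  have hEq : ∑ q ∈ (n.divisors ×ˢ n.divisors).filter (fun q => q.1 = q.2),
      totient q.1 * totient q.2 = ∑ d ∈ n.divisors, totient d ^ 2 := by
    rw [Finset.sum_filter, Finset.sum_product]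
    refine Finset.sum_congr rfl fun d hd => ?_
    rw [Finset.sum_ite_eq n.divisors d (fun e => totient d * totient e), if_pos hd, sq]
  have hD12 : ∑ q ∈ (n.divisors ×ˢ n.divisors).filter (fun q => q.1 ∣ q.2),
      totient q.1 * totient q.2 = ∑ d ∈ n.divisors, totient d * d := by
    rw [Finset.sum_filter, Finset.sum_product_right]
    refine Finset.sum_congr rfl fun e he => ?_
    rw [Nat.mem_divisors] at he
    calc ∑ d ∈ n.divisors, (if d ∣ e then totient d * totient e else 0)
        = (∑ d ∈ n.divisors.filter (· ∣ e), totient d) * totient e := by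
          rw [Finset.sum_filter, Finset.sum_mul]
          refine Finset.sum_congr rfl fun d _ => ?_
          split <;> simp
      _ = totient e * e := by
          rw [Nat.divisors_filter_dvd_of_dvd hn0 he.1, Nat.sum_totient, mul_comm]
  have hD21 : ∑ q ∈ (n.divisors ×ˢ n.divisors).filter (fun q => q.2 ∣ q.1),
      totient q.1 * totient q.2 = ∑ d ∈ n.divisors, totient d * d := by
    rw [Finset.sum_filter, Finset.sum_product]
    refine Finset.sum_congr rfl fun d hd => ?_
    rw [Nat.mem_divisors] at hd
    calc ∑ e ∈ n.divisors, (if e ∣ d then totient d * totient e else 0)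
        = totient d * (∑ e ∈ n.divisors.filter (· ∣ d), totient e) := by
          rw [Finset.sum_filter, Finset.mul_sum]
          refine Finset.sum_congr rfl fun e _ => ?_
          split <;> simp
      _ = totient d * d := by
          rw [Nat.divisors_filter_dvd_of_dvd hn0 hd.1, Nat.sum_totient]
  have hsplit : (∑ q ∈ (n.divisors ×ˢ n.divisors).filter (fun q => q.1 ∣ q.2 ∨ q.2 ∣ q.1),
      totient q.1 * totient q.2) +
      ∑ q ∈ (n.divisors ×ˢ n.divisors).filter (fun q => q.1 = q.2),
        totient q.1 * totient q.2 =
      (∑ q ∈ (n.divisors ×ˢ n.divisors).filter (fun q => q.1 ∣ q.2),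
        totient q.1 * totient q.2) +
      ∑ q ∈ (n.divisors ×ˢ n.divisors).filter (fun q => q.2 ∣ q.1),
        totient q.1 * totient q.2 := by
    simp only [Finset.sum_filter]
    rw [← Finset.sum_add_distrib, ← Finset.sum_add_distrib]
    refine Finset.sum_congr rfl fun q hq => ?_
    by_cases h12 : q.1 ∣ q.2 <;> by_cases h21 : q.2 ∣ q.1
    · have : q.1 = q.2 := Nat.dvd_antisymm h12 h21
      simp [h12, h21, this]
    · have : ¬ q.1 = q.2 := fun h => h21 (h ▸ dvd_refl _)
      simp [h12, h21, this]
    · have : ¬ q.1 = q.2 := fun h => h12 (h ▸ dvd_refl _)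
      simp [h12, h21, this]
    · have : ¬ q.1 = q.2 := fun h => h12 (h ▸ dvd_refl _)
      simp [h12, h21, this]
  rw [hEq, hD12, hD21] at hsplit
  omega

open Finset Subgroup Nat in
theorem my_count_aux {G : Type*} [Group G] [Fintype G] [IsCyclic G] [DecidableEq G]
    [DecidableRel (powerGraph G).Adj] {n : ℕ} (hcard : Fintype.card G = n) (hn0 : n ≠ 0) :
    2 * #(powerGraph G).edgeFinset + n + ∑ d ∈ n.divisors, totient d ^ 2 =
      2 * ∑ d ∈ n.divisors, totient d * d := by
  have hAdj : ∀ x y : G, (powerGraph G).Adj x y ↔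
      x ≠ y ∧ (orderOf x ∣ orderOf y ∨ orderOf y ∣ orderOf x) := by
    intro x y
    show (x ≠ y ∧ (x ∈ zpowers y ∨ y ∈ zpowers x)) ↔ _
    rw [my_mem_zpowers_iff, my_mem_zpowers_iff]
  set P : Finset (G × G) :=
    univ.filter (fun p : G × G => orderOf p.1 ∣ orderOf p.2 ∨ orderOf p.2 ∣ orderOf p.1) with hP
  set T : Finset (ℕ × ℕ) :=
    (n.divisors ×ˢ n.divisors).filter (fun q => q.1 ∣ q.2 ∨ q.2 ∣ q.1) with hT
  have h1 : 2 * #(powerGraph G).edgeFinset =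
      #(univ.filter fun (x, y) => (powerGraph G).Adj x y) :=
    SimpleGraph.two_mul_card_edgeFinset (G := powerGraph G)
  have hdiag : #(P.filter fun p : G × G => p.1 = p.2) = n := by
    have : #(P.filter fun p : G × G => p.1 = p.2) = #(univ : Finset G) := by
      refine Finset.card_bij' (fun p _ => p.1) (fun x _ => (x, x))
        (fun p hp => mem_univ _) (fun x hx => ?_) (fun p hp => ?_) (fun x hx => rfl)
      · simp [hP]
      · simp only [hP, mem_filter] at hp
        exact Prod.ext rfl hp.2
    rw [this, Finset.card_univ, hcard]
  have hne : #(P.filter fun p : G × G => ¬ p.1 = p.2) =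
      #(univ.filter fun (x, y) => (powerGraph G).Adj x y) := by
    congr 1
    ext p
    simp only [hP, mem_filter, mem_univ, true_and, hAdj]
    tauto
  have h2 : #(univ.filter fun (x, y) => (powerGraph G).Adj x y) + n = #P := by
    rw [← hdiag, ← hne, add_comm]
    exact Finset.card_filter_add_card_filter_not _
  have h3 : #P = ∑ q ∈ T, totient q.1 * totient q.2 := by
    rw [Finset.card_eq_sum_card_fiberwise
      (f := fun p : G × G => (orderOf p.1, orderOf p.2)) (t := T)
      (by
        intro p hp
        simp only [Finset.mem_coe, hP, mem_filter, mem_univ, true_and] at hp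
        simp only [Finset.mem_coe, hT, mem_filter, mem_product, Nat.mem_divisors]
        exact ⟨⟨⟨hcard ▸ orderOf_dvd_card, hn0⟩, ⟨hcard ▸ orderOf_dvd_card, hn0⟩⟩, hp⟩)]
    refine Finset.sum_congr rfl ?_
    intro q hq
    simp only [hT, mem_filter, mem_product, Nat.mem_divisors] at hq
    obtain ⟨⟨⟨hq1, -⟩, ⟨hq2, -⟩⟩, hqcomp⟩ := hq
    have hstep : P.filter (fun p : G × G => (orderOf p.1, orderOf p.2) = q) =
        univ.filter (fun p : G × G => orderOf p.1 = q.1 ∧ orderOf p.2 = q.2) := by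
      ext p
      simp only [hP, mem_filter, mem_univ, true_and, Prod.ext_iff]
      constructor
      · rintro ⟨-, h⟩; exact h
      · rintro ⟨e1, e2⟩
        rw [e1, e2]
        exact ⟨hqcomp, rfl, rfl⟩
    rw [hstep, ← Finset.univ_product_univ,
      Finset.filter_product (fun a : G => orderOf a = q.1) (fun b : G => orderOf b = q.2),
      Finset.card_product,
      IsCyclic.card_orderOf_eq_totient (hcard ▸ hq1),
      IsCyclic.card_orderOf_eq_totient (hcard ▸ hq2)]
  have h4 := my_sum_aux n hn0
  rw [← hT] at h4
  omega

theorem two_mul_card_power_graph_edges_zmod (n : ℕ) [NeZero n] :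
    2 * Nat.card (powerGraph (Multiplicative (ZMod n))).edgeSet =
      2 * (∑ d ∈ n.divisors, Nat.totient d * d) -
        (∑ d ∈ n.divisors, Nat.totient d ^ 2) - n := by
  classical
  have hcard : Fintype.card (Multiplicative (ZMod n)) = n := by simp
  have key := my_count_aux (G := Multiplicative (ZMod n)) hcard (NeZero.ne n)
  have hE : Nat.card (powerGraph (Multiplicative (ZMod n))).edgeSet =
      (powerGraph (Multiplicative (ZMod n))).edgeFinset.card := by
    rw [SimpleGraph.edgeFinset_card, Nat.card_eq_fintype_card]
  omega
end

section
/- In the cyclic group ℤ_n, an element z of order e has degree in the power graph equal to e − 1 − φ(e) + ∑_{d ∣ n/e} φ(d·e). -/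
/-- In a finite cyclic group, membership in `zpowers g` is equivalent to
divisibility of orders. -/
lemma mem_zpowers_iff_orderOf_dvd' {α : Type*} [Group α] [Fintype α] [IsCyclic α]
    (g x : α) : x ∈ Subgroup.zpowers g ↔ orderOf x ∣ orderOf g := by
  classical
  constructor
  · exact orderOf_dvd_of_mem_zpowers
  · intro hdvd
    set S : Finset α := Finset.univ.filter (fun a => a ^ orderOf g = 1) with hS
    have hle : S.card ≤ orderOf g := IsCyclic.card_pow_eq_one_le (orderOf_pos g)
    set T : Finset α := Finset.univ.filter (fun y => y ∈ Subgroup.zpowers g) with hT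
    have hsub : T ⊆ S := by
      intro y hy
      simp only [hT, Finset.mem_filter, Finset.mem_univ, true_and] at hy
      simp only [hS, Finset.mem_filter, Finset.mem_univ, true_and]
      exact orderOf_dvd_iff_pow_eq_one.mp (orderOf_dvd_of_mem_zpowers hy)
    have hcardT : T.card = orderOf g := by
      have h1 : T.card = Fintype.card {y : α // y ∈ Subgroup.zpowers g} :=
        (Fintype.card_subtype _).symm
      have h2 : Fintype.card {y : α // y ∈ Subgroup.zpowers g}
          = Nat.card ↥(Subgroup.zpowers g) := by
        rw [Nat.card_eq_fintype_card]
      rw [h1, h2, Nat.card_zpowers]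
    have hEq : S = T := (Finset.eq_of_subset_of_card_le hsub (hcardT ▸ hle)).symm
    have hxS : x ∈ S := by
      simp only [hS, Finset.mem_filter, Finset.mem_univ, true_and]
      exact orderOf_dvd_iff_pow_eq_one.mp hdvd
    rw [hEq, hT] at hxS
    simpa using hxS

theorem degree_power_graph_zmod (n : ℕ) [NeZero n]
    (z : Multiplicative (ZMod n)) (e : ℕ) (he : orderOf z = e) :
    (Nat.card ((powerGraph (Multiplicative (ZMod n))).neighborSet z) : ℤ) =
      (e : ℤ) - 1 - Nat.totient e +
        ∑ d ∈ (n / e).divisors, (Nat.totient (d * e) : ℤ) := by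
  classical
  have hcard : Fintype.card (Multiplicative (ZMod n)) = n := by simp [ZMod.card]
  have hen : e ∣ n := by
    have h := orderOf_dvd_card (x := z); rw [hcard, he] at h; exact h
  have hepos : 0 < e := he ▸ orderOf_pos z
  have hnpos : 0 < n := Nat.pos_of_ne_zero (NeZero.ne n)
  have hmem : ∀ g : Multiplicative (ZMod n),
      (g ∈ Subgroup.zpowers z ↔ orderOf g ∣ e) := by
    intro g; rw [mem_zpowers_iff_orderOf_dvd', he]
  have hmem' : ∀ g : Multiplicative (ZMod n),
      (z ∈ Subgroup.zpowers g ↔ e ∣ orderOf g) := by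
    intro g; rw [mem_zpowers_iff_orderOf_dvd', he]
  set A : Finset (Multiplicative (ZMod n)) :=
    Finset.univ.filter (fun g => orderOf g ∣ e) with hA
  set B : Finset (Multiplicative (ZMod n)) :=
    Finset.univ.filter (fun g => e ∣ orderOf g) with hB
  have hN : ((powerGraph (Multiplicative (ZMod n))).neighborSet z).toFinset
      = (A ∪ B).erase z := by
    ext g
    rw [Set.mem_toFinset]
    simp only [Set.mem_toFinset, SimpleGraph.mem_neighborSet, powerGraph,
      Finset.mem_erase, Finset.mem_union, hA, hB, Finset.mem_filter, Finset.mem_univ,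
      true_and]
    constructor
    · rintro ⟨hne, hor⟩
      refine ⟨fun h => hne (h ▸ rfl), ?_⟩
      rcases hor with h | h
      · exact Or.inr ((hmem' g).mp h)
      · exact Or.inl ((hmem g).mp h)
    · rintro ⟨hne, hor⟩
      refine ⟨fun h => hne h.symm, ?_⟩
      rcases hor with h | h
      · exact Or.inr ((hmem g).mpr h)
      · exact Or.inl ((hmem' g).mpr h)
  have hNcard : Nat.card ((powerGraph (Multiplicative (ZMod n))).neighborSet z)
      = ((A ∪ B).erase z).card := by
    rw [Nat.card_coe_set_eq, Set.ncard_eq_toFinset_card', hN]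
  have hAcard : A.card = e := by
    have h0 : A = Finset.univ.filter (fun g => g ∈ Subgroup.zpowers z) := by
      ext g
      simp only [hA, Finset.mem_filter, Finset.mem_univ, true_and]
      exact (hmem g).symm
    have h1 : A.card = Fintype.card {g : Multiplicative (ZMod n) //
        g ∈ Subgroup.zpowers z} := by rw [h0]; exact (Fintype.card_subtype _).symm
    rw [h1, ← Nat.card_eq_fintype_card]
    show Nat.card ↥(Subgroup.zpowers z) = e
    rw [Nat.card_zpowers, he]
  have hABcard : (A ∩ B).card = Nat.totient e := by
    have h0 : A ∩ B = Finset.univ.filter (fun g => orderOf g = e) := by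
      ext g
      simp only [Finset.mem_inter, hA, hB, Finset.mem_filter, Finset.mem_univ, true_and]
      constructor
      · rintro ⟨h1, h2⟩; exact Nat.dvd_antisymm h1 h2
      · rintro rfl; exact ⟨dvd_rfl, dvd_rfl⟩
    rw [h0, IsCyclic.card_orderOf_eq_totient (by rw [hcard]; exact hen)]
  have hBcard : B.card = ∑ d ∈ (n / e).divisors, Nat.totient (d * e) := by
    have hdisj : ∀ d1 ∈ (n / e).divisors, ∀ d2 ∈ (n / e).divisors, d1 ≠ d2 →
        Disjoint (Finset.univ.filter (fun g : Multiplicative (ZMod n) => orderOf g = d1 * e))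
          (Finset.univ.filter (fun g : Multiplicative (ZMod n) => orderOf g = d2 * e)) := by
      intro d1 _ d2 _ hne
      rw [Finset.disjoint_left]
      intro g hg1 hg2
      simp only [Finset.mem_filter, Finset.mem_univ, true_and] at hg1 hg2
      exact hne (Nat.eq_of_mul_eq_mul_right hepos (hg1.symm.trans hg2))
    have hBeq : B = (n / e).divisors.biUnion
        (fun d => Finset.univ.filter (fun g : Multiplicative (ZMod n) => orderOf g = d * e)) := by
      ext g
      simp only [hB, Finset.mem_filter, Finset.mem_univ, true_and, Finset.mem_biUnion,
        Nat.mem_divisors]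
      constructor
      · intro hdvd
        refine ⟨orderOf g / e, ⟨?_, ?_⟩, (Nat.div_mul_cancel hdvd).symm⟩
        · rw [Nat.dvd_div_iff_mul_dvd hen, Nat.mul_div_cancel' hdvd]
          have h := orderOf_dvd_card (x := g); rwa [hcard] at h
        · exact (Nat.div_pos (Nat.le_of_dvd hnpos hen) hepos).ne'
      · rintro ⟨d, _, hord⟩
        rw [hord]; exact dvd_mul_left e d
    rw [hBeq, Finset.card_biUnion hdisj]
    refine Finset.sum_congr rfl (fun d hd => ?_)
    have hde : d * e ∣ n := by
      rw [Nat.mem_divisors] at hd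
      have := (Nat.dvd_div_iff_mul_dvd hen).mp hd.1
      rwa [mul_comm] at this
    exact IsCyclic.card_orderOf_eq_totient (by rw [hcard]; exact hde)
  have hzAB : z ∈ A ∪ B := by
    apply Finset.mem_union_left
    simp only [hA, Finset.mem_filter, Finset.mem_univ, true_and, he]
    exact dvd_rfl
  have h1 : ((A ∪ B).erase z).card + 1 = (A ∪ B).card := Finset.card_erase_add_one hzAB
  have h2 : (A ∪ B).card + (A ∩ B).card = A.card + B.card :=
    Finset.card_union_add_card_inter A B
  rw [hNcard]
  rw [hAcard, hABcard, hBcard] at h2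
  have h2' : ((A ∪ B).card : ℤ) + (Nat.totient e : ℤ)
      = (e : ℤ) + ∑ d ∈ (n / e).divisors, (Nat.totient (d * e) : ℤ) := by
    exact_mod_cast h2
  have h1' : (((A ∪ B).erase z).card : ℤ) + 1 = ((A ∪ B).card : ℤ) := by
    exact_mod_cast h1
  linarith
end

section
/- In the cyclic group ℤ_n, an element z of order e has power-graph degree at least e − 1 + φ(e)·(n/e − 1), with equality if and only if e and n/e are coprime. -/
open Finset

/-- In a finite cyclic group, membership in `zpowers` is equivalent to divisibility
of orders. -/
lemma mem_zpowers_iff_orderOf_dvd_orderOf {G : Type*} [Group G] [Fintype G] [IsCyclic G]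
    {a b : G} : a ∈ Subgroup.zpowers b ↔ orderOf a ∣ orderOf b := by
  classical
  constructor
  · exact orderOf_dvd_of_mem_zpowers
  · intro h
    have hb : 0 < orderOf b := orderOf_pos b
    have hcard : (univ.filter (fun x : G => x ∈ Subgroup.zpowers b)).card = orderOf b := by
      rw [← Fintype.card_subtype, ← Nat.card_eq_fintype_card, Nat.card_zpowers]
    have hsub : (univ.filter (fun x : G => x ∈ Subgroup.zpowers b)) ⊆
        univ.filter (fun x : G => x ^ orderOf b = 1) := by
      intro x hx
      simp only [mem_filter, mem_univ, true_and] at hx ⊢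
      exact orderOf_dvd_iff_pow_eq_one.mp (orderOf_dvd_of_mem_zpowers hx)
    have hle : (univ.filter (fun x : G => x ^ orderOf b = 1)).card ≤ orderOf b := by
      simpa using IsCyclic.card_pow_eq_one_le (α := G) hb
    have heq := Finset.eq_of_subset_of_card_le hsub (by rw [hcard]; exact hle)
    have ha : a ∈ univ.filter (fun x : G => x ^ orderOf b = 1) := by
      simp only [mem_filter, mem_univ, true_and]
      exact orderOf_dvd_iff_pow_eq_one.mp h
    rw [← heq] at ha
    simpa using ha

lemma coprime_of_totient_mul_eq {a b : ℕ} (ha : 0 < a) (hb : 0 < b)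
    (h : Nat.totient (a * b) = Nat.totient a * Nat.totient b) : Nat.Coprime a b := by
  have key := Nat.totient_gcd_mul_totient_mul a b
  rw [← h] at key
  have hab : 0 < Nat.totient (a * b) := Nat.totient_pos.mpr (Nat.mul_pos ha hb)
  have hg : Nat.totient (Nat.gcd a b) = Nat.gcd a b := by
    have key2 : Nat.totient (Nat.gcd a b) * Nat.totient (a * b)
        = Nat.gcd a b * Nat.totient (a * b) := by rw [key]; ring
    exact Nat.eq_of_mul_eq_mul_right hab key2
  have hg1 : 0 < Nat.gcd a b := Nat.gcd_pos_of_pos_left _ ha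
  by_contra hc
  have h2 : 1 < Nat.gcd a b := by
    rcases Nat.eq_or_lt_of_le hg1 with h' | h'
    · exact absurd h'.symm hc
    · exact h'
  exact absurd hg (Nat.ne_of_lt (Nat.totient_lt _ h2))

theorem degree_power_graph_zmod_lower_bound (n : ℕ) [NeZero n]
    (z : Multiplicative (ZMod n)) (e : ℕ) (he : orderOf z = e) :
    Nat.card ((powerGraph (Multiplicative (ZMod n))).neighborSet z) ≥
        e - 1 + Nat.totient e * (n / e - 1) ∧
      (Nat.card ((powerGraph (Multiplicative (ZMod n))).neighborSet z) =
          e - 1 + Nat.totient e * (n / e - 1) ↔ Nat.Coprime e (n / e)) := by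
  classical
  have hcardG : Fintype.card (Multiplicative (ZMod n)) = n := by
    rw [Fintype.card_multiplicative, ZMod.card]
  have hn0 : 0 < n := NeZero.pos n
  have hen : e ∣ n := by
    have hd := orderOf_dvd_card (G := Multiplicative (ZMod n)) (x := z)
    rw [hcardG, he] at hd
    exact hd
  have he0 : 0 < e := he ▸ orderOf_pos z
  set m := n / e with hm
  have hm0 : 0 < m := Nat.div_pos (Nat.le_of_dvd hn0 hen) he0
  have hem : e * m = n := Nat.mul_div_cancel' hen
  -- the neighbor set as a filter
  have hN : Nat.card ((powerGraph (Multiplicative (ZMod n))).neighborSet z) =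
      (univ.filter (fun x : Multiplicative (ZMod n) =>
        x ≠ z ∧ (orderOf x ∣ e ∨ e ∣ orderOf x))).card := by
    rw [Nat.card_eq_fintype_card, ← Set.toFinset_card]
    congr 1
    ext x
    simp only [Set.mem_toFinset, SimpleGraph.mem_neighborSet, mem_filter, mem_univ, true_and]
    show (z ≠ x ∧ (z ∈ Subgroup.zpowers x ∨ x ∈ Subgroup.zpowers z)) ↔ _
    rw [mem_zpowers_iff_orderOf_dvd_orderOf, mem_zpowers_iff_orderOf_dvd_orderOf, he]
    constructor
    · rintro ⟨h1, h2⟩; exact ⟨Ne.symm h1, h2.symm⟩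
    · rintro ⟨h1, h2⟩; exact ⟨Ne.symm h1, h2.symm⟩
  set A : Finset (Multiplicative (ZMod n)) := univ.filter (fun x => orderOf x ∣ e) with hA
  set B : Finset (Multiplicative (ZMod n)) :=
    univ.filter (fun x => e ∣ orderOf x ∧ orderOf x ≠ e) with hB
  have hzA : z ∈ A := by simp [hA, he]
  have hdisj : Disjoint A B := by
    rw [Finset.disjoint_left]
    intro x hx hx'
    simp only [hA, hB, mem_filter, mem_univ, true_and] at hx hx'
    exact hx'.2 (Nat.dvd_antisymm hx hx'.1)
  have hsplit : univ.filter (fun x : Multiplicative (ZMod n) =>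
      x ≠ z ∧ (orderOf x ∣ e ∨ e ∣ orderOf x)) = (A ∪ B).erase z := by
    ext x
    simp only [hA, hB, mem_filter, mem_univ, true_and, mem_erase, mem_union]
    constructor
    · rintro ⟨h1, h2 | h2⟩
      · exact ⟨h1, Or.inl h2⟩
      · rcases eq_or_ne (orderOf x) e with h3 | h3
        · exact ⟨h1, Or.inl (h3 ▸ dvd_rfl)⟩
        · exact ⟨h1, Or.inr ⟨h2, h3⟩⟩
    · rintro ⟨h1, h2 | h2⟩
      · exact ⟨h1, Or.inl h2⟩
      · exact ⟨h1, Or.inr h2.1⟩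
  have hcardA : A.card = e := by
    have hAz : A = univ.filter (fun x => x ∈ Subgroup.zpowers z) := by
      ext x
      simp only [hA, mem_filter, mem_univ, true_and]
      rw [mem_zpowers_iff_orderOf_dvd_orderOf, he]
    rw [hAz, ← Fintype.card_subtype, ← Nat.card_eq_fintype_card, Nat.card_zpowers, he]
  -- card of B via fibers over orderOf
  set D : Finset ℕ := n.divisors.filter (fun d => e ∣ d ∧ d ≠ e) with hD
  have hcardB : B.card = ∑ d ∈ D, Nat.totient d := by
    rw [Finset.card_eq_sum_card_fiberwise
      (f := fun x : Multiplicative (ZMod n) => orderOf x) (t := D)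
      (fun x hx => by
        simp only [hB, Finset.mem_coe, mem_filter, mem_univ, true_and] at hx
        simp only [hD, Finset.mem_coe, mem_filter, Nat.mem_divisors]
        have hd := orderOf_dvd_card (G := Multiplicative (ZMod n)) (x := x)
        rw [hcardG] at hd
        exact ⟨⟨hd, hn0.ne'⟩, hx⟩)]
    apply Finset.sum_congr rfl
    intro d hd
    simp only [hD, mem_filter, Nat.mem_divisors] at hd
    have hBd : B.filter (fun x => orderOf x = d)
        = univ.filter (fun x : Multiplicative (ZMod n) => orderOf x = d) := by
      ext x
      simp only [hB, mem_filter, mem_univ, true_and]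
      constructor
      · rintro ⟨_, h2⟩; exact h2
      · intro h2; exact ⟨⟨h2 ▸ hd.2.1, h2 ▸ hd.2.2⟩, h2⟩
    rw [hBd, IsCyclic.card_orderOf_eq_totient (by rw [hcardG]; exact hd.1.1)]
  -- reindex D via k ↦ e * k
  set K : Finset ℕ := m.divisors.filter (fun k => k ≠ 1) with hK
  have hDK : D = K.image (fun k => e * k) := by
    ext d
    simp only [hD, hK, mem_filter, Nat.mem_divisors, mem_image]
    constructor
    · rintro ⟨⟨hdn, _⟩, hed, hde⟩
      obtain ⟨k, rfl⟩ := hed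
      refine ⟨k, ⟨⟨?_, hm0.ne'⟩, ?_⟩, rfl⟩
      · rw [← hem] at hdn
        exact (mul_dvd_mul_iff_left he0.ne').mp hdn
      · rintro rfl; exact hde (mul_one e)
    · rintro ⟨k, ⟨⟨hkm, _⟩, hk1⟩, rfl⟩
      refine ⟨⟨?_, hn0.ne'⟩, ⟨k, rfl⟩, ?_⟩
      · rw [← hem]; exact mul_dvd_mul_left e hkm
      · intro h
        apply hk1
        have := (Nat.eq_of_mul_eq_mul_left he0 (h.trans (mul_one e).symm))
        exact this
  have hTsum : ∑ d ∈ D, Nat.totient d = ∑ k ∈ K, Nat.totient (e * k) := by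
    rw [hDK, Finset.sum_image (fun a _ b _ h => Nat.eq_of_mul_eq_mul_left he0 h)]
  -- sum of totients over K
  have hsumK : ∑ k ∈ K, Nat.totient k = m - 1 := by
    have h1 : m.divisors = insert 1 K := by
      ext k
      simp only [hK, mem_insert, mem_filter, Nat.mem_divisors]
      constructor
      · intro hk
        rcases eq_or_ne k 1 with h | h
        · exact Or.inl h
        · exact Or.inr ⟨hk, h⟩
      · rintro (rfl | ⟨hk, _⟩)
        · exact ⟨one_dvd m, hm0.ne'⟩
        · exact hk
    have h2 : (1 : ℕ) ∉ K := by simp [hK]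
    have h3 := Nat.sum_totient m
    rw [h1, Finset.sum_insert h2, Nat.totient_one] at h3
    omega
  -- the degree formula
  have hdeg : Nat.card ((powerGraph (Multiplicative (ZMod n))).neighborSet z) =
      e - 1 + ∑ k ∈ K, Nat.totient (e * k) := by
    rw [hN, hsplit, Finset.card_erase_of_mem (Finset.mem_union_left _ hzA),
      Finset.card_union_of_disjoint hdisj, hcardA, hcardB, hTsum]
    omega
  -- termwise bound
  have hterm : ∀ k ∈ K, Nat.totient e * Nat.totient k ≤ Nat.totient (e * k) :=
    fun k _ => Nat.totient_super_multiplicative e k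
  have hlow : Nat.totient e * (m - 1) ≤ ∑ k ∈ K, Nat.totient (e * k) := by
    calc Nat.totient e * (m - 1) = ∑ k ∈ K, Nat.totient e * Nat.totient k := by
          rw [← Finset.mul_sum, hsumK]
      _ ≤ ∑ k ∈ K, Nat.totient (e * k) := Finset.sum_le_sum hterm
  constructor
  · rw [hdeg]; exact Nat.add_le_add_left hlow _
  · rw [hdeg, add_right_inj]
    rw [show Nat.totient e * (m - 1) = ∑ k ∈ K, Nat.totient e * Nat.totient k from by
      rw [← Finset.mul_sum, hsumK]]
    rw [eq_comm, Finset.sum_eq_sum_iff_of_le hterm]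
    constructor
    · intro h
      rcases eq_or_ne m 1 with h1 | h1
      · rw [h1]; exact Nat.coprime_one_right e
      · have hmK : m ∈ K := by
          simp only [hK, mem_filter, Nat.mem_divisors]
          exact ⟨⟨dvd_rfl, hm0.ne'⟩, h1⟩
        exact coprime_of_totient_mul_eq he0 hm0 (h m hmK).symm
    · intro h k hk
      have hkm : k ∣ m := by
        simp only [hK, mem_filter, Nat.mem_divisors] at hk
        exact hk.1.1
      exact (Nat.totient_mul (h.coprime_dvd_right hkm)).symm
end

section
/- Let G be a finite group which is an internal semidirect product of a normal abelian subgroup U and a subgroup V of coprime orders. Then for all u ∈ U and v ∈ V, the order of the product uv in G divides o(u)·o(v). -/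
theorem orderOf_mul_dvd_of_semidirect (G : Type*) [Group G] [Finite G]
    (U V : Subgroup G) [U.Normal]
    (hab : ∀ a ∈ U, ∀ b ∈ U, a * b = b * a)
    (hprod : ∀ g : G, ∃ u ∈ U, ∃ v ∈ V, g = u * v)
    (hinter : U ⊓ V = ⊥)
    (hcop : Nat.Coprime (Nat.card U) (Nat.card V)) :
    ∀ u ∈ U, ∀ v ∈ V, orderOf (u * v) ∣ orderOf u * orderOf v := by
  intro u hu v hv
  set m := orderOf u with hm
  -- key invariant
  have key : ∀ k : ℕ, ∃ w ∈ U, w ^ m = 1 ∧ (u * v) ^ k = w * v ^ k := by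
    intro k
    induction k with
    | zero => exact ⟨1, one_mem U, one_pow m, by simp⟩
    | succ k ih =>
      obtain ⟨w, hwU, hwm, hwk⟩ := ih
      refine ⟨u * (v * w * v⁻¹), ?_, ?_, ?_⟩
      · exact mul_mem hu (Subgroup.Normal.conj_mem ‹U.Normal› w hwU v)
      · have hc : Commute u (v * w * v⁻¹) := by
          exact hab u hu _ (Subgroup.Normal.conj_mem ‹U.Normal› w hwU v)
        rw [hc.mul_pow, pow_orderOf_eq_one]
        have : (v * w * v⁻¹) ^ m = v * w ^ m * v⁻¹ := by
          rw [conj_pow]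
        rw [this, hwm]
        group
      · rw [pow_succ', hwk]
        group
  obtain ⟨w, hwU, hwm, hwk⟩ := key (orderOf v)
  rw [pow_orderOf_eq_one, mul_one] at hwk
  apply orderOf_dvd_of_pow_eq_one
  rw [mul_comm, pow_mul, hwk, hwm]
end

section
/- A finite group containing a cyclic subgroup of prime index has a non-trivial normal Sylow subgroup. -/
universe u

private theorem aux_normal_sylow : ∀ (n : ℕ) (G : Type u) [Group G] [Finite G],
    Nat.card G = n → ∀ C : Subgroup G, IsCyclic C → (C.index).Prime →
    ∃ r : ℕ, r.Prime ∧ r ∣ Nat.card G ∧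
      ∃ P : Sylow r G, (P : Subgroup G).Normal ∧ (P : Subgroup G) ≠ ⊥ := by
  intro n
  induction n using Nat.strong_induction_on with
  | _ n ih =>
  intro G _ _ hn C hC hidx
  set p := C.index with hp
  haveI : Fact p.Prime := ⟨hidx⟩
  have hcard : p * Nat.card C = Nat.card G := C.index_mul_card
  have hCpos : 0 < Nat.card C := Nat.card_pos
  have hG1 : 1 < Nat.card G := by
    calc 1 < p * 1 := by simpa using hidx.one_lt
    _ ≤ p * Nat.card C := by exact Nat.mul_le_mul_left p hCpos
    _ = Nat.card G := hcard
  by_cases hq : ∀ q : ℕ, q.Prime → q ∣ Nat.card C → q = p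
  · -- G is a p-group
    refine ⟨p, hidx, ⟨Nat.card C, hcard.symm⟩, ?_⟩
    obtain ⟨P⟩ : Nonempty (Sylow p G) := inferInstance
    have hidx1 : (P : Subgroup G).index = 1 := by
      by_contra h1
      obtain ⟨r, hr, hrdvd⟩ := Nat.exists_prime_and_dvd h1
      have hrG : r ∣ Nat.card G := hrdvd.trans (P : Subgroup G).index_dvd_card
      have : r = p := by
        rcases (Nat.Prime.dvd_mul hr).mp (hcard ▸ hrG) with h | h
        · exact (Nat.prime_dvd_prime_iff_eq hr hidx).mp h
        · exact hq r hr h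
      exact P.not_dvd_index (this ▸ hrdvd)
    have htop : (P : Subgroup G) = ⊤ := Subgroup.index_eq_one.mp hidx1
    refine ⟨P, ?_, ?_⟩
    · rw [htop]; infer_instance
    · rw [htop]
      intro h
      have : Nat.card G = 1 := by
        rw [← Subgroup.card_top (G := G), h, Subgroup.card_bot]
      omega
  · push_neg at hq
    obtain ⟨q, hqprime, hqdvd, hqp⟩ := hq
    haveI : Fact q.Prime := ⟨hqprime⟩
    set b := (Nat.card G).factorization q with hb
    have hGpos : Nat.card G ≠ 0 := Nat.card_pos.ne'
    have hfactC : (Nat.card C).factorization q = b := by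
      rw [hb, ← hcard, Nat.factorization_mul hidx.pos.ne' hCpos.ne',
        hidx.factorization]
      simp [Finsupp.single_apply, hqp.symm]
    -- a Sylow q-subgroup of G inside C
    obtain ⟨Q₀⟩ : Nonempty (Sylow q C) := inferInstance
    have hQ₀ : Nat.card Q₀ = q ^ b := by
      rw [Q₀.card_eq_multiplicity, hfactC]
    have hQ'card : Nat.card ((Q₀ : Subgroup C).map C.subtype) = q ^ b := by
      rw [← hQ₀]
      exact (Nat.card_congr
        (Subgroup.equivMapOfInjective _ _ C.subtype_injective).toEquiv).symm
    let Q : Sylow q G := Sylow.ofCard _ hQ'card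
    have hQcoe : (Q : Subgroup G) = (Q₀ : Subgroup C).map C.subtype := rfl
    have hQcard : Nat.card (Q : Subgroup G) = q ^ b := hQ'card
    have hble : 1 ≤ b := hqprime.factorization_pos_of_dvd hGpos
      (hqdvd.trans C.card_subgroup_dvd_card)
    have hQbot : (Q : Subgroup G) ≠ ⊥ := by
      intro h
      rw [h, Subgroup.card_bot] at hQcard
      have := Nat.one_lt_pow (Nat.one_le_iff_ne_zero.mp hble) hqprime.one_lt
      omega
    have hQleC : (Q : Subgroup G) ≤ C := Subgroup.map_subtype_le _
    -- C centralizes Q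
    have hcomm : ∀ x ∈ C, ∀ y ∈ C, x * y = y * x := by
      letI := hC.commGroup
      intro x hx y hy
      exact congrArg Subtype.val (mul_comm (⟨x, hx⟩ : C) (⟨y, hy⟩ : C))
    have hcent : C ≤ Subgroup.centralizer (Q : Subgroup G) := by
      intro c hc
      rw [Subgroup.mem_centralizer_iff]
      intro y hy
      exact hcomm y (hQleC hy) c hc
    have hCN : C ≤ Subgroup.normalizer ((Q : Subgroup G) : Set G) := by
      intro c hc
      rw [Subgroup.mem_normalizer_iff]
      intro h
      constructor
      · intro hh
        have hcm := hcomm c hc h (hQleC hh)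
        have h3 : c * h * c⁻¹ = h := by rw [hcm]; group
        rwa [h3]
      · intro hh
        have hcm := hcomm c hc (c * h * c⁻¹) (hQleC hh)
        have h2 : (c * h * c⁻¹) * c = c * h := by group
        rw [h2] at hcm
        have h3 : c * h * c⁻¹ = h := mul_left_cancel hcm
        rwa [h3] at hh
    have hNdvd : (Subgroup.normalizer ((Q : Subgroup G) : Set G)).index ∣ p :=
      Subgroup.index_dvd_of_le hCN
    rcases (Nat.Prime.eq_one_or_self_of_dvd hidx _ hNdvd) with hN1 | hNp
    · -- Q is normal
      refine ⟨q, hqprime, hqdvd.trans C.card_subgroup_dvd_card, Q,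
        Subgroup.normalizer_eq_top_iff.mp (Subgroup.index_eq_one.mp hN1), hQbot⟩
    · -- normalizer = C, Burnside transfer
      have hNcard : Nat.card (Subgroup.normalizer ((Q : Subgroup G) : Set G)) = Nat.card C := by
        have h1 : Nat.card (Subgroup.normalizer ((Q : Subgroup G) : Set G)) * p = Nat.card G := by
          rw [← hNp]; exact Subgroup.card_mul_index _
        have h2 : Nat.card C * p = Nat.card G := by rw [mul_comm]; exact hcard
        have := h1.trans h2.symm
        exact Nat.eq_of_mul_eq_mul_right hidx.pos this
      have hNC : C = Subgroup.normalizer ((Q : Subgroup G) : Set G) :=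
        Subgroup.eq_of_le_of_card_ge hCN hNcard.le
      have hP : Subgroup.normalizer ((Q : Subgroup G) : Set G) ≤ Subgroup.centralizer (Q : Subgroup G) :=
        hNC ▸ hcent
      set K := (MonoidHom.transferSylow Q hP).ker with hK
      have hcomp : Subgroup.IsComplement' K (Q : Subgroup G) :=
        MonoidHom.ker_transferSylow_isComplement' Q hP
      have hKQ : Nat.card K * q ^ b = Nat.card G := by
        rw [← hQcard]; exact hcomp.card_mul
      have hKpos : 0 < Nat.card K := Nat.card_pos
      have hKindex : K.index = q ^ b := by
        have h1 : Nat.card K * K.index = Nat.card G := Subgroup.card_mul_index K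
        exact Nat.eq_of_mul_eq_mul_left hKpos (h1.trans hKQ.symm)
      have hqK : ¬ q ∣ Nat.card K := by
        intro h
        have h1 : (Nat.card G).factorization q
            = (Nat.card K).factorization q + b := by
          rw [← hKQ, Nat.factorization_mul hKpos.ne' (pow_pos hqprime.pos b).ne',
            hqprime.factorization_pow]
          simp
        have h2 : 0 < (Nat.card K).factorization q :=
          hqprime.factorization_pos_of_dvd hKpos.ne' h
        omega
      -- compute relindex C K = p
      have hx1 : K.relIndex C ∣ q ^ b :=
        hKindex ▸ Subgroup.relIndex_dvd_index_of_normal K C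
      have e1 : C.relIndex K * q ^ b = (C ⊓ K).index := by
        rw [← hKindex, ← Subgroup.inf_relIndex_right C K]
        exact Subgroup.relIndex_mul_index inf_le_right
      have e2 : K.relIndex C * p = (C ⊓ K).index := by
        rw [← Subgroup.inf_relIndex_left C K]
        exact Subgroup.relIndex_mul_index inf_le_left
      obtain ⟨m, hm⟩ := hx1
      have hxpos : 0 < K.relIndex C := Nat.pos_of_ne_zero fun h => by
        rw [h, zero_mul] at hm
        exact (pow_pos hqprime.pos b).ne' hm
      have hmp : C.relIndex K * m = p := by
        have : C.relIndex K * (K.relIndex C * m) = K.relIndex C * p := by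
          rw [← hm, e1, e2]
        have h2 : K.relIndex C * (C.relIndex K * m) = K.relIndex C * p := by
          rw [← this]; ring
        exact Nat.eq_of_mul_eq_mul_left hxpos h2
      have hrel : C.relIndex K = p := by
        rcases Nat.Prime.eq_one_or_self_of_dvd hidx (C.relIndex K) ⟨m, hmp.symm⟩ with h | h
        · exfalso
          rw [h, one_mul] at hmp
          have hmdvd : p ∣ q ^ b := hmp ▸ Dvd.intro_left _ hm.symm
          exact hqp ((Nat.prime_dvd_prime_iff_eq hidx hqprime).mp
            (hidx.dvd_of_dvd_pow hmdvd)).symm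
        · exact h
      -- apply induction hypothesis to K
      have hKlt : Nat.card K < n := by
        rw [← hn, ← hKQ]
        have : 1 < q ^ b := Nat.one_lt_pow (Nat.one_le_iff_ne_zero.mp hble) hqprime.one_lt
        exact (Nat.lt_mul_iff_one_lt_right hKpos).mpr this
      have hC'cyc : IsCyclic (C.subgroupOf K) := by
        haveI := hC
        haveI : IsCyclic (C ⊓ K : Subgroup G) := Subgroup.isCyclic_of_le inf_le_left
        have e : ((C ⊓ K).subgroupOf K) ≃* (C ⊓ K : Subgroup G) :=
          Subgroup.subgroupOfEquivOfLe inf_le_right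
        rw [← Subgroup.inf_subgroupOf_right]
        exact isCyclic_of_surjective e.symm e.symm.surjective
      have hC'idx : (C.subgroupOf K).index = p := hrel
      obtain ⟨r, hr, hrdvd, R, hRnorm, hRbot⟩ :=
        ih (Nat.card K) hKlt K rfl (C.subgroupOf K) hC'cyc (hC'idx ▸ hidx)
      haveI : Fact r.Prime := ⟨hr⟩
      have hrq : r ≠ q := fun h => hqK (h ▸ hrdvd)
      have hRcard : Nat.card ((R : Subgroup K).map K.subtype)
          = r ^ (Nat.card G).factorization r := by
        have h1 : Nat.card ((R : Subgroup K).map K.subtype) = Nat.card (R : Subgroup K) :=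
          (Nat.card_congr (Subgroup.equivMapOfInjective _ _ K.subtype_injective).toEquiv).symm
        have h2 : (Nat.card G).factorization r = (Nat.card K).factorization r := by
          rw [← hKQ, Nat.factorization_mul hKpos.ne' (pow_pos hqprime.pos b).ne',
            hqprime.factorization_pow]
          simp [Finsupp.single_apply, hrq.symm]
        rw [h1, R.card_eq_multiplicity, h2]
      refine ⟨r, hr, hrdvd.trans ⟨q ^ b, hKQ.symm⟩, Sylow.ofCard _ hRcard, ?_, ?_⟩
      · haveI := Sylow.characteristic_of_normal R hRnorm
        show ((R : Subgroup K).map K.subtype).Normal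
        infer_instance
      · show (R : Subgroup K).map K.subtype ≠ ⊥
        intro hbot
        apply hRbot
        have : Nat.card ((R : Subgroup K).map K.subtype) = Nat.card (R : Subgroup K) :=
          (Nat.card_congr (Subgroup.equivMapOfInjective _ _ K.subtype_injective).toEquiv).symm
        rw [hbot, Subgroup.card_bot] at this
        exact Subgroup.eq_bot_of_card_eq _ this.symm

theorem exists_normal_sylow_of_cyclic_prime_index (G : Type*) [Group G] [Finite G]
    (C : Subgroup G) (hC : IsCyclic C) (hidx : (C.index).Prime) :
    ∃ r : ℕ, r.Prime ∧ r ∣ Nat.card G ∧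
      ∃ P : Sylow r G, (P : Subgroup G).Normal ∧ (P : Subgroup G) ≠ ⊥ :=
  aux_normal_sylow (Nat.card G) G rfl C hC hidx
end

section
/- If G is a finite group of order n and there exists a bijection λ : G → ℤ_n such that o(g) divides o(λ(g)) for all g ∈ G, and moreover ∑_{g∈G}(2·o(g) − φ(o(g))) = ∑_{z∈ℤ_n}(2·o(z) − φ(o(z))), then G is cyclic. -/
lemma key_totient_lt {d m : ℕ} (hd : 0 < d) (hm : 0 < m) (hdvd : d ∣ m) (hne : d ≠ m) :
    2 * d - Nat.totient d < 2 * m - Nat.totient m := by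
  have hm2d : 2 * d ≤ m := by
    obtain ⟨k, rfl⟩ := hdvd
    have hk : 2 ≤ k := by
      have hk0 : k ≠ 0 := by rintro rfl; simp at hm
      have hk1 : k ≠ 1 := by rintro rfl; simp at hne
      omega
    calc 2 * d = d * 2 := by ring
    _ ≤ d * k := Nat.mul_le_mul_left d hk
  have hm1 : 1 < m := by omega
  have h1 : Nat.totient m < m := Nat.totient_lt m hm1
  have h2 : 0 < Nat.totient d := Nat.totient_pos.mpr hd
  have h3 : Nat.totient d ≤ d := Nat.totient_le d
  omega

theorem isCyclic_of_order_dvd_bijection (G : Type*) [Group G] [Fintype G]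
    (n : ℕ) [NeZero n] (hcard : Fintype.card G = n)
    (lam : G ≃ ZMod n)
    (hdvd : ∀ g : G, orderOf g ∣ addOrderOf (lam g))
    (hsum : ∑ g : G, (2 * orderOf g - Nat.totient (orderOf g)) =
        ∑ z : ZMod n, (2 * addOrderOf z - Nat.totient (addOrderOf z))) :
    IsCyclic G := by
  classical
  have hpos : ∀ g : G, 0 < orderOf g := fun g => orderOf_pos g
  have hle : ∀ g : G, 2 * orderOf g - Nat.totient (orderOf g) ≤
      2 * addOrderOf (lam g) - Nat.totient (addOrderOf (lam g)) := by
    intro g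
    rcases eq_or_ne (orderOf g) (addOrderOf (lam g)) with h | h
    · rw [h]
    · exact le_of_lt (key_totient_lt (hpos g) (addOrderOf_pos (lam g)) (hdvd g) h)
  have hsum' : ∑ g : G, (2 * orderOf g - Nat.totient (orderOf g)) =
      ∑ g : G, (2 * addOrderOf (lam g) - Nat.totient (addOrderOf (lam g))) := by
    rw [hsum]
    exact (Equiv.sum_comp lam fun z => 2 * addOrderOf z - Nat.totient (addOrderOf z)).symm
  have heq : ∀ g : G, orderOf g = addOrderOf (lam g) := by
    intro g
    by_contra hne
    have hlt : ∑ g : G, (2 * orderOf g - Nat.totient (orderOf g)) <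
        ∑ g : G, (2 * addOrderOf (lam g) - Nat.totient (addOrderOf (lam g))) :=
      Finset.sum_lt_sum (fun i _ => hle i)
        ⟨g, Finset.mem_univ g, key_totient_lt (hpos g) (addOrderOf_pos (lam g)) (hdvd g) hne⟩
    omega
  have h1 : orderOf (lam.symm 1) = n := by
    rw [heq (lam.symm 1), Equiv.apply_symm_apply]
    exact ZMod.addOrderOf_one n
  exact isCyclic_of_orderOf_eq_card (lam.symm 1) (by rw [h1, Nat.card_eq_fintype_card, hcard])
end
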